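/- Let R be a commutative integral domain and I ⊆ R a prime ideal. Fix a Hermite–Padé interpolation problem with data f₁,…,f_m ∈ R[[x]], degree bounds n₁,…,n_m ∈ ℕ, and order σ ∈ ℕ, considered over Frac(R) and, after coefficientwise reduction modulo I, over Frac(R/I). Let P = (p₁,…,p_m) be a normalised σ-basis of the problem over Frac(R) and Q = (q₁,…,q_m) a normalised σ-basis of the reduced problem over Frac(R/I). If defect(p_r) = defect(q_r) and the critical index of p_r equals the critical index of q_r for every r, then every p_r has all of its polynomial coefficients in the localisation R_I of R at I, and Q is the image of P under the map π : R_I → Frac(R/I) induced by the quotient R → R/I, applied to all coefficients. -/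

import Mathlib

open Polynomial

/-- The term `nᵢ - deg pᵢ` entering the defect, valued `⊤` when `pᵢ = 0`
(i.e. when `deg pᵢ = -∞`). -/
def defectTerm {K : Type*} [Semiring K] (ni : ℕ) (p : K[X]) : WithTop ℤ :=
  WithBot.recBotCoe (⊤ : WithTop ℤ) (fun d : ℕ => (((ni : ℤ) - (d : ℤ) : ℤ) : WithTop ℤ)) p.degree

/-- The defect of a polynomial vector `p` with respect to the degree bounds `n`:
the minimum of `nᵢ - deg pᵢ` over all components (components with `pᵢ = 0`
contribute `⊤` and hence do not affect the minimum unless `p = 0`). -/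
def defect {K : Type*} [Semiring K] {m : ℕ} (n : Fin m → ℕ) (p : Fin m → K[X]) : WithTop ℤ :=
  Finset.univ.inf fun i => defectTerm (n i) (p i)

/-- `p` is a solution of the Hermite–Padé interpolation problem given by the
power series `f` and the order `σ`: the coefficient of `x^k` in
`p₁·f₁ + ⋯ + p_m·f_m` vanishes for all `k < σ`, i.e. `ord (p·f) ≥ σ`. -/
def IsSolution {K : Type*} [CommSemiring K] {m : ℕ} (f : Fin m → PowerSeries K) (σ : ℕ)
    (p : Fin m → K[X]) : Prop :=
  ∀ k < σ, PowerSeries.coeff k (∑ i, (p i : PowerSeries K) * f i) = 0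

/-- `i` is the critical index of `p`: the least index at which the defect is attained. -/
def IsCriticalIndex {K : Type*} [Semiring K] {m : ℕ} (n : Fin m → ℕ) (p : Fin m → K[X])
    (i : Fin m) : Prop :=
  defectTerm (n i) (p i) = defect n p ∧ ∀ j : Fin m, j < i → defectTerm (n j) (p j) ≠ defect n p

/-- `p` is normalised: its component at its critical index is monic. -/
def IsNormalisedVec {K : Type*} [Semiring K] {m : ℕ} (n : Fin m → ℕ) (p : Fin m → K[X]) : Prop :=
  ∃ i : Fin m, IsCriticalIndex n p i ∧ (p i).Monic

/-- `p` is reduced with respect to `q`: at the critical index `j` of `q` we have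
`deg p_j < deg q_j`. -/
def ReducedWrt {K : Type*} [Semiring K] {m : ℕ} (n : Fin m → ℕ) (p q : Fin m → K[X]) : Prop :=
  ∀ j : Fin m, IsCriticalIndex n q j → (p j).degree < (q j).degree

/-- A sequence of polynomial vectors is sorted if for `r < s` either the defect of `P r`
is strictly larger than that of `P s`, or the defects agree and the critical index of
`P r` is smaller than that of `P s`. -/
def IsSortedSeq {K : Type*} [Semiring K] {m : ℕ} (n : Fin m → ℕ)
    (P : Fin m → Fin m → K[X]) : Prop :=
  ∀ r s : Fin m, r < s →
    defect n (P s) < defect n (P r) ∨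
      (defect n (P r) = defect n (P s) ∧
        ∀ i j : Fin m, IsCriticalIndex n (P r) i → IsCriticalIndex n (P s) j → i < j)

/-- A sequence of polynomial vectors is normalised if it is sorted, pairwise reduced,
and all its members are normalised. -/
def IsNormalisedSeq {K : Type*} [Semiring K] {m : ℕ} (n : Fin m → ℕ)
    (P : Fin m → Fin m → K[X]) : Prop :=
  IsSortedSeq n P ∧ (∀ r s : Fin m, r ≠ s → ReducedWrt n (P r) (P s)) ∧
    ∀ r, IsNormalisedVec n (P r)

/-- `P` is a σ-basis of the Hermite–Padé interpolation problem given by `f`, `n` and `σ`: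
every member is a solution, every solution `q` has a unique representation
`q = Σ_r α_r • P_r`, and in this representation `defect q ≤ defect (P r) - deg (α r)`
(written additively as `defect q + deg (α r) ≤ defect (P r)`) whenever `α r ≠ 0`. -/
def IsSigmaBasis {K : Type*} [CommRing K] {m : ℕ} (f : Fin m → PowerSeries K)
    (n : Fin m → ℕ) (σ : ℕ) (P : Fin m → Fin m → K[X]) : Prop :=
  (∀ r, IsSolution f σ (P r)) ∧
    ∀ q : Fin m → K[X], IsSolution f σ q →
      (∃! α : Fin m → K[X], ∀ i, q i = ∑ r, α r * P r i) ∧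
      ∀ α : Fin m → K[X], (∀ i, q i = ∑ r, α r * P r i) →
        ∀ r, α r ≠ 0 →
          defect n q + (((α r).natDegree : ℤ) : WithTop ℤ) ≤ defect n (P r)


section AuxLemmas

lemma defectTerm_zero {K : Type*} [Semiring K] (ni : ℕ) :
    defectTerm ni (0 : K[X]) = ⊤ := by
  simp [defectTerm, Polynomial.degree_zero]

lemma defectTerm_of_ne_zero {K : Type*} [Semiring K] (ni : ℕ) (p : K[X]) (hp : p ≠ 0) :
    defectTerm ni p = (((ni : ℤ) - (p.natDegree : ℤ) : ℤ) : WithTop ℤ) := by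
  rw [defectTerm, Polynomial.degree_eq_natDegree hp]
  rfl

lemma defectTerm_eq_top_iff {K : Type*} [Semiring K] {ni : ℕ} {p : K[X]} :
    defectTerm ni p = ⊤ ↔ p = 0 := by
  constructor
  · intro h
    by_contra hp
    rw [defectTerm_of_ne_zero ni p hp] at h
    exact WithTop.coe_ne_top h
  · rintro rfl
    exact defectTerm_zero ni

lemma critical_unique {K : Type*} [Semiring K] {m : ℕ} {n : Fin m → ℕ} {p : Fin m → K[X]}
    {i i' : Fin m} (h : IsCriticalIndex n p i) (h' : IsCriticalIndex n p i') : i = i' := by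
  rcases lt_trichotomy i i' with hlt | he | hgt
  · exact absurd h.1 (h'.2 i hlt)
  · exact he
  · exact absurd h'.1 (h.2 i' hgt)

lemma uniq_char {K : Type*} [Field K] {m : ℕ} (f : Fin m → PowerSeries K) (n : Fin m → ℕ)
    (σ : ℕ) (G : Fin m → Fin m → K[X]) (e : Fin m → ℤ) (j : Fin m → Fin m) (D : Fin m → ℕ)
    (hD : ∀ s, (n (j s) : ℤ) = e s + D s)
    (h1 : ∀ s i (t : ℕ), (n i : ℤ) - t < e s → (G s i).coeff t = 0)
    (h2 : ∀ s, (G s (j s)).natDegree = D s ∧ (G s (j s)).coeff (D s) = 1)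
    (h3 : ∀ t s, t ≠ s → ∀ u : ℕ, (D s : ℤ) ≤ u → (G t (j s)).coeff u = 0)
    (h4 : ∀ q : Fin m → K[X], IsSolution f σ q → ∃ α : Fin m → K[X], ∀ i, q i = ∑ t, α t * G t i)
    {r : Fin m} (p p' : Fin m → K[X])
    (hc1 : IsSolution f σ p) (hc1' : IsSolution f σ p')
    (hc2 : ∀ i (t : ℕ), (n i : ℤ) - t < e r → (p i).coeff t = 0)
    (hc2' : ∀ i (t : ℕ), (n i : ℤ) - t < e r → (p' i).coeff t = 0)
    (hc3 : ∀ s, s ≠ r → ∀ u : ℕ, (D s : ℤ) ≤ u → (p (j s)).coeff u = 0)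
    (hc3' : ∀ s, s ≠ r → ∀ u : ℕ, (D s : ℤ) ≤ u → (p' (j s)).coeff u = 0)
    (hc4 : (p (j r)).coeff (D r) = 1) (hc4' : (p' (j r)).coeff (D r) = 1) :
    p = p' := by
  classical
  by_contra hne
  set q : Fin m → K[X] := fun i => p i - p' i with hq
  have hqsol : IsSolution f σ q := by
    intro k hk
    have e1 := hc1 k hk
    have e2 := hc1' k hk
    have : (∑ i, ((q i : K[X]) : PowerSeries K) * f i)
        = (∑ i, ((p i : K[X]) : PowerSeries K) * f i)
          - (∑ i, ((p' i : K[X]) : PowerSeries K) * f i) := by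
      rw [← Finset.sum_sub_distrib]
      refine Finset.sum_congr rfl fun i _ => ?_
      rw [hq]
      push_cast
      ring
    rw [this, map_sub, e1, e2, sub_zero]
  obtain ⟨α, hα⟩ := h4 q hqsol
  have hqne : ∃ i, q i ≠ 0 := by
    by_contra h
    push_neg at h
    apply hne
    funext i
    have := h i
    simpa [hq, sub_eq_zero] using this
  obtain ⟨i₀, hi₀⟩ := hqne
  set S : Finset (Fin m) := Finset.univ.filter (fun t => α t ≠ 0) with hS
  have hSne : S.Nonempty := by
    by_contra h
    rw [Finset.not_nonempty_iff_eq_empty] at h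
    have hz : ∀ t, α t = 0 := by
      intro t
      by_contra ht
      have : t ∈ S := by simp [hS, ht]
      simp [h] at this
    apply hi₀
    rw [hα i₀]
    simp [hz]
  set v : Fin m → ℤ := fun t => ((α t).natDegree : ℤ) - e t with hv
  set V : ℤ := S.sup' hSne v with hV
  set S' : Finset (Fin m) := S.filter (fun t => v t = V) with hS'
  have hS'ne : S'.Nonempty := by
    obtain ⟨t, ht, htv⟩ := Finset.exists_mem_eq_sup' hSne v
    exact ⟨t, by simp [hS', ht, htv.symm, hV]⟩
  obtain ⟨s, hsS', hsmax⟩ := S'.exists_max_image e hS'ne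
  have hsS : s ∈ S := (Finset.mem_filter.mp hsS').1
  have hsv : v s = V := (Finset.mem_filter.mp hsS').2
  have hαs : α s ≠ 0 := by simpa [hS] using hsS
  set A : ℕ := (α s).natDegree with hA
  set N : ℕ := A + D s with hN
  -- the coefficient of q (j s) at N is zero
  have hzero : (q (j s)).coeff N = 0 := by
    rcases eq_or_ne s r with hsr | hsr
    · subst hsr
      rcases Nat.eq_zero_or_pos A with hA0 | hApos
      · have : N = D s := by omega
        rw [this]
        simp [hq, coeff_sub, hc4, hc4']
      · have hlt : (n (j s) : ℤ) - N < e s := by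
          have := hD s
          omega
        simp [hq, coeff_sub, hc2 (j s) N hlt, hc2' (j s) N hlt]
    · have hle : (D s : ℤ) ≤ N := by omega
      simp [hq, coeff_sub, hc3 s hsr N hle, hc3' s hsr N hle]
  -- the coefficient computed from the representation
  have hrep : (q (j s)).coeff N = ∑ t, (α t * G t (j s)).coeff N := by
    rw [hα (j s), Polynomial.finset_sum_coeff]
  have hterm_ne : ∀ t, t ≠ s → (α t * G t (j s)).coeff N = 0 := by
    intro t hts
    by_cases htS : t ∈ S
    · rw [Polynomial.coeff_mul]
      apply Finset.sum_eq_zero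
      rintro ⟨a, c⟩ hmem
      rw [Finset.HasAntidiagonal.mem_antidiagonal] at hmem
      by_contra hne0
      have ha : (α t).coeff a ≠ 0 := fun h => hne0 (by simp [h])
      have hc : (G t (j s)).coeff c ≠ 0 := fun h => hne0 (by simp [h])
      have haA : a ≤ (α t).natDegree := le_natDegree_of_ne_zero ha
      have hc1b : (c : ℤ) ≤ (n (j s) : ℤ) - e t := by
        by_contra h
        push_neg at h
        exact hc (h1 t (j s) c (by omega))
      have hc2b : (c : ℤ) < D s := by
        by_contra h
        push_neg at h
        exact hc (h3 t s hts c h)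
      have hvt : v t ≤ V := Finset.le_sup' v htS
      rcases lt_or_eq_of_le hvt with hlt | heq
      · -- v t < v s
        have := hD s
        have hvs : v s = V := hsv
        simp only [hv] at hlt hvs
        omega
      · -- v t = V, so e t ≤ e s
        have het : e t ≤ e s := hsmax t (by simp [hS', htS, heq])
        have := hD s
        simp only [hv] at heq hsv
        omega
    · have : α t = 0 := by simpa [hS] using htS
      simp [this]
  have hterm_s : (α s * G s (j s)).coeff N = (α s).leadingCoeff := by
    rw [Polynomial.coeff_mul]
    rw [Finset.sum_eq_single_of_mem (A, D s) (by rw [Finset.HasAntidiagonal.mem_antidiagonal])]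
    · rw [Polynomial.leadingCoeff, (h2 s).2, mul_one]
    · rintro ⟨a, c⟩ hmem hneq
      rw [Finset.HasAntidiagonal.mem_antidiagonal] at hmem
      rcases lt_trichotomy a A with h | h | h
      · have hcD : D s < c := by omega
        have : (G s (j s)).coeff c = 0 :=
          Polynomial.coeff_eq_zero_of_natDegree_lt (by rw [(h2 s).1]; exact hcD)
        simp [this]
      · exfalso; apply hneq; simp at hmem ⊢; omega
      · have : (α s).coeff a = 0 := Polynomial.coeff_eq_zero_of_natDegree_lt h
        simp [this]
  have : (q (j s)).coeff N = (α s).leadingCoeff := by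
    rw [hrep, Finset.sum_eq_single s (fun t _ hts => hterm_ne t hts) (by simp), hterm_s]
  rw [hzero] at this
  exact Polynomial.leadingCoeff_ne_zero.mpr hαs this.symm


lemma exists_det_ne_zero_of_inj {E U K : Type*} [Fintype E] [Fintype U] [DecidableEq U]
    [DecidableEq E] [Field K]
    (A : Matrix E U K) (hinj : ∀ z : U → K, A.mulVec z = 0 → z = 0) :
    ∃ g : U → E, (A.submatrix g id).det ≠ 0 := by
  classical
  set rows : E → (U → K) := fun e => A e with hrows
  have hspan : Submodule.span K (Set.range rows) = ⊤ := by
    by_contra h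
    obtain ⟨φ, hφne, hφ⟩ :=
      Submodule.exists_dual_map_eq_bot_of_lt_top (lt_top_iff_ne_top.mpr h) inferInstance
    set z : U → K := fun u => φ (fun uu => if u = uu then 1 else 0) with hz
    have hφy : ∀ y : U → K, φ y = ∑ u, y u * z u := by
      intro y
      have := LinearMap.pi_apply_eq_sum_univ φ y
      simpa [hz, smul_eq_mul] using this
    have hmv : A.mulVec z = 0 := by
      funext ee
      have hmem : rows ee ∈ Submodule.span K (Set.range rows) :=
        Submodule.subset_span ⟨ee, rfl⟩
      have : φ (rows ee) = 0 := by
        have : φ (rows ee) ∈ Submodule.map φ (Submodule.span K (Set.range rows)) :=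
          Submodule.mem_map_of_mem hmem
        rw [hφ] at this
        exact (Submodule.mem_bot K).mp this
      rw [hφy] at this
      simpa [Matrix.mulVec, dotProduct, hrows] using this
    have hz0 : z = 0 := hinj z hmv
    apply hφne
    apply LinearMap.ext
    intro y
    rw [hφy, hz0]
    simp
  obtain ⟨b, hbT, hspanb, hlib⟩ := exists_linearIndependent K (Set.range rows)
  rw [hspan] at hspanb
  have hbfin : b.Finite := Set.Finite.subset (Set.finite_range rows) hbT
  haveI : Fintype b := hbfin.fintype
  let Bas : Module.Basis b K (U → K) := Module.Basis.mk hlib (by rw [Subtype.range_coe, hspanb])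
  have hcard : Fintype.card b = Fintype.card U := by
    have h1 : Module.finrank K (U → K) = Fintype.card b :=
      Module.finrank_eq_card_basis Bas
    have h2 : Module.finrank K (U → K) = Fintype.card U := Module.finrank_pi K
    omega
  let eq : U ≃ b := (Fintype.equivOfCardEq hcard).symm
  have hchoice : ∀ u : U, ∃ ee : E, rows ee = (eq u : U → K) := fun u => hbT (eq u).2
  choose g hg using hchoice
  refine ⟨g, ?_⟩
  have hli : LinearIndependent K (fun u : U => (A.submatrix g id) u) := by
    have : (fun u : U => (A.submatrix g id) u) = (fun u : U => ((eq u : U → K))) := by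
      funext u
      have := hg u
      funext uu
      simp [Matrix.submatrix, ← this, hrows]
    rw [this]
    exact hlib.comp eq (Equiv.injective eq)
  have hunit : IsUnit (A.submatrix g id) := Matrix.linearIndependent_rows_iff_isUnit.mp hli
  have := (Matrix.isUnit_iff_isUnit_det _).mp hunit
  exact this.ne_zero

lemma map_mulVec_comm {E U R K : Type*} [Fintype U] [CommRing R] [CommRing K]
    (φ : R →+* K) (M : Matrix E U R) (v : U → R) :
    (M.map φ).mulVec (fun u => φ (v u)) = fun e => φ (M.mulVec v e) := by
  funext e
  simp [Matrix.mulVec, dotProduct, map_sum, Matrix.map]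

lemma cramer_step {U R L : Type*} [Fintype U] [DecidableEq U] [CommRing R] [Field L]
    (χ : R →+* L) (S : Matrix U U R) (bb : U → R) (w : U → L)
    (hw : (S.map χ).mulVec w = fun u => χ (bb u)) (u : U) :
    w u * χ S.det = χ (S.adjugate.mulVec bb u) := by
  have step : (S.map χ).adjugate.mulVec ((S.map χ).mulVec w) = (S.map χ).det • w := by
    rw [Matrix.mulVec_mulVec, Matrix.adjugate_mul, Matrix.smul_mulVec,
      Matrix.one_mulVec]
  rw [hw] at step
  have hadj : (S.map χ).adjugate = S.adjugate.map χ := by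
    rw [← RingHom.mapMatrix_apply, ← RingHom.map_adjugate, RingHom.mapMatrix_apply]
  have lhs_eq : (S.map χ).adjugate.mulVec (fun u' => χ (bb u')) =
      fun u' => χ (S.adjugate.mulVec bb u') := by
    rw [hadj]
    exact map_mulVec_comm χ S.adjugate bb
  have hdetmap : (S.map χ).det = χ S.det := by
    rw [← RingHom.mapMatrix_apply, ← RingHom.map_det]
  have := congrFun (lhs_eq ▸ step) u
  rw [hdetmap] at this
  rw [this]
  simp [Pi.smul_apply, smul_eq_mul, mul_comm]

lemma restrict_system {E U R L : Type*} [Fintype U] [CommRing R] [CommRing L]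
    (χ : R →+* L) (A : Matrix E U R) (b : E → R) (g : U → E) (w : U → L)
    (hw : (A.map χ).mulVec w = fun e => χ (b e)) :
    ((A.submatrix g id).map χ).mulVec w = fun u' => χ (b (g u')) := by
  funext u'
  have := congrFun hw (g u')
  simpa [Matrix.mulVec, dotProduct, Matrix.submatrix, Matrix.map] using this

lemma key_linalg {E U R K k : Type*} [Fintype E] [Fintype U] [DecidableEq E] [DecidableEq U]
    [CommRing R] [Field K] [Field k]
    (φ : R →+* K) (ψ : R →+* k)
    (A : Matrix E U R) (b : E → R)
    (x : U → K) (hx : (A.map φ).mulVec x = fun e => φ (b e))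
    (y : U → k) (hy : (A.map ψ).mulVec y = fun e => ψ (b e))
    (huniq : ∀ z : U → k, (A.map ψ).mulVec z = 0 → z = 0) :
    ∀ u, ∃ a c : R, ψ c ≠ 0 ∧ x u * φ c = φ a ∧ y u * ψ c = ψ a := by
  classical
  obtain ⟨g, hdet⟩ := exists_det_ne_zero_of_inj (A.map ψ) huniq
  intro u
  set S : Matrix U U R := A.submatrix g id with hSdef
  have hmapψ : (A.map ψ).submatrix g id = S.map ψ := rfl
  have hdetS : ψ S.det ≠ 0 := by
    rw [hmapψ] at hdet
    rwa [← RingHom.mapMatrix_apply, ← RingHom.map_det] at hdet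
  exact ⟨S.adjugate.mulVec (fun uu => b (g uu)) u, S.det, hdetS,
    cramer_step φ S _ x (restrict_system φ A b g x hx) u,
    cramer_step ψ S _ y (restrict_system ψ A b g y hy) u⟩

/-- auxiliary: sums over ranges agree when the function eventually vanishes -/
lemma sum_range_stable {L : Type*} [AddCommMonoid L] (F : ℕ → L) (a b : ℕ)
    (ha : ∀ t, a ≤ t → F t = 0) (hb : ∀ t, b ≤ t → F t = 0) :
    ∑ t ∈ Finset.range a, F t = ∑ t ∈ Finset.range b, F t := by
  have h1 : ∑ t ∈ Finset.range a, F t = ∑ t ∈ Finset.range (max a b), F t := by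
    apply Finset.sum_subset
    · exact Finset.range_subset_range.mpr (le_max_left a b)
    · intro t _ ht
      exact ha t (by simpa using ht)
  have h2 : ∑ t ∈ Finset.range b, F t = ∑ t ∈ Finset.range (max a b), F t := by
    apply Finset.sum_subset
    · exact Finset.range_subset_range.mpr (le_max_right a b)
    · intro t _ ht
      exact hb t (by simpa using ht)
  rw [h1, h2]

/-- The index type for the equations of the linear system. -/
abbrev sysE (m σ B : ℕ) : Type :=
  Fin σ ⊕ ((Fin m × Fin (B + 1)) ⊕ ((Fin m × Fin (B + 1)) ⊕ Unit))

/-- The coefficient matrix of the linear system characterising the `r`-th element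
of a normalised σ-basis. -/
noncomputable def sysMat {R : Type*} [CommRing R] {m : ℕ} (σ B : ℕ) (f : Fin m → PowerSeries R)
    (n : Fin m → ℕ) (e : Fin m → ℤ) (j : Fin m → Fin m) (D : Fin m → ℕ) (r : Fin m) :
    Matrix (sysE m σ B) (Fin m × Fin (B + 1)) R :=
  fun ee u =>
    match ee with
    | Sum.inl k =>
        if (u.2 : ℕ) ≤ (k : ℕ) then PowerSeries.coeff ((k : ℕ) - (u.2 : ℕ)) (f u.1) else 0
    | Sum.inr (Sum.inl w) =>
        if (n w.1 : ℤ) - ((w.2 : ℕ) : ℤ) < e r then (if u = w then 1 else 0) else 0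
    | Sum.inr (Sum.inr (Sum.inl w)) =>
        if w.1 ≠ r ∧ (D w.1 : ℤ) ≤ ((w.2 : ℕ) : ℤ) then
          (if u = (j w.1, w.2) then 1 else 0) else 0
    | Sum.inr (Sum.inr (Sum.inr _)) =>
        if u.1 = j r ∧ (u.2 : ℕ) = D r then 1 else 0

/-- The right hand side of the linear system. -/
def sysVec {R : Type*} [CommRing R] (m σ B : ℕ) : sysE m σ B → R :=
  fun ee =>
    match ee with
    | Sum.inr (Sum.inr (Sum.inr _)) => 1
    | _ => 0

section Rows

variable {R L : Type*} [CommRing R] [CommRing L] {m : ℕ} (σ B : ℕ) (χ : R →+* L)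
  (f : Fin m → PowerSeries R) (n : Fin m → ℕ) (e : Fin m → ℤ) (j : Fin m → Fin m)
  (D : Fin m → ℕ) (r : Fin m) (p : Fin m → L[X])

lemma sys_row1 (hsupp : ∀ i (t : ℕ), B < t → (p i).coeff t = 0) (k : Fin σ) :
    (((sysMat σ B f n e j D r).map χ).mulVec (fun u => (p u.1).coeff u.2)) (Sum.inl k)
      = PowerSeries.coeff k (∑ i, (p i : PowerSeries L) * PowerSeries.map χ (f i)) := by
  classical
  rw [map_sum]
  simp only [Matrix.mulVec, dotProduct, Matrix.map_apply, sysMat]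
  rw [Fintype.sum_prod_type]
  refine Finset.sum_congr rfl fun i _ => ?_
  have hper : ∀ t : ℕ,
      (if t ≤ (k : ℕ) then χ (PowerSeries.coeff ((k : ℕ) - t) (f i)) else 0)
        * (p i).coeff t
      = (if t ≤ (k : ℕ) then (p i).coeff t * χ (PowerSeries.coeff ((k : ℕ) - t) (f i))
        else 0) := by
    intro t
    split <;> ring
  have lhs_eq : ∑ t : Fin (B + 1),
      χ (if (t : ℕ) ≤ (k : ℕ) then PowerSeries.coeff ((k : ℕ) - (t : ℕ)) (f i) else 0)
        * (p i).coeff (t : ℕ)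
      = ∑ t ∈ Finset.range (B + 1),
        (if t ≤ (k : ℕ) then (p i).coeff t * χ (PowerSeries.coeff ((k : ℕ) - t) (f i))
          else 0) := by
    rw [Fin.sum_univ_eq_sum_range
      (fun t => χ (if t ≤ (k : ℕ) then PowerSeries.coeff ((k : ℕ) - t) (f i) else 0)
        * (p i).coeff t)]
    refine Finset.sum_congr rfl fun t _ => ?_
    rw [apply_ite χ, map_zero]
    exact hper t
  rw [lhs_eq]
  have rhs_eq : PowerSeries.coeff k ((p i : PowerSeries L) * PowerSeries.map χ (f i))
      = ∑ t ∈ Finset.range ((k : ℕ) + 1),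
        (if t ≤ (k : ℕ) then (p i).coeff t * χ (PowerSeries.coeff ((k : ℕ) - t) (f i))
          else 0) := by
    rw [PowerSeries.coeff_mul, Finset.Nat.sum_antidiagonal_eq_sum_range_succ_mk]
    refine Finset.sum_congr rfl fun t ht => ?_
    rw [Finset.mem_range] at ht
    rw [if_pos (by omega)]
    simp [Polynomial.coeff_coe, PowerSeries.coeff_map]
  rw [rhs_eq]
  apply sum_range_stable
  · intro t ht
    rcases le_or_gt t (k : ℕ) with h | h
    · rw [if_pos h, hsupp i t (by omega), zero_mul]
    · rw [if_neg (by omega)]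
  · intro t ht
    rw [if_neg (by omega)]

lemma sys_row2 (w : Fin m × Fin (B + 1)) :
    (((sysMat σ B f n e j D r).map χ).mulVec (fun u => (p u.1).coeff u.2))
        (Sum.inr (Sum.inl w))
      = if (n w.1 : ℤ) - ((w.2 : ℕ) : ℤ) < e r then (p w.1).coeff w.2 else 0 := by
  classical
  simp only [Matrix.mulVec, dotProduct, Matrix.map_apply, sysMat]
  by_cases hcond : (n w.1 : ℤ) - ((w.2 : ℕ) : ℤ) < e r
  · rw [if_pos hcond]
    simp only [if_pos hcond, apply_ite χ, map_one, map_zero, ite_mul, one_mul, zero_mul]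
    rw [Finset.sum_ite_eq' Finset.univ w (fun u => (p u.1).coeff u.2)]
    simp
  · rw [if_neg hcond]
    refine Finset.sum_eq_zero fun u _ => ?_
    rw [if_neg hcond, map_zero, zero_mul]

lemma sys_row3 (w : Fin m × Fin (B + 1)) :
    (((sysMat σ B f n e j D r).map χ).mulVec (fun u => (p u.1).coeff u.2))
        (Sum.inr (Sum.inr (Sum.inl w)))
      = if w.1 ≠ r ∧ (D w.1 : ℤ) ≤ ((w.2 : ℕ) : ℤ) then (p (j w.1)).coeff w.2 else 0 := by
  classical
  simp only [Matrix.mulVec, dotProduct, Matrix.map_apply, sysMat]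
  by_cases hcond : w.1 ≠ r ∧ (D w.1 : ℤ) ≤ ((w.2 : ℕ) : ℤ)
  · rw [if_pos hcond]
    simp only [if_pos hcond, apply_ite χ, map_one, map_zero, ite_mul, one_mul, zero_mul]
    rw [Finset.sum_ite_eq' Finset.univ (j w.1, w.2) (fun u => (p u.1).coeff u.2)]
    simp
  · rw [if_neg hcond]
    refine Finset.sum_eq_zero fun u _ => ?_
    rw [if_neg hcond, map_zero, zero_mul]

lemma sys_row4 (hDr : D r < B + 1) :
    (((sysMat σ B f n e j D r).map χ).mulVec (fun u => (p u.1).coeff u.2))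
        (Sum.inr (Sum.inr (Sum.inr ())))
      = (p (j r)).coeff (D r) := by
  classical
  simp only [Matrix.mulVec, dotProduct, Matrix.map_apply, sysMat]
  rw [Finset.sum_eq_single ((j r, ⟨D r, hDr⟩) : Fin m × Fin (B + 1))]
  · rw [if_pos ⟨rfl, rfl⟩]
    simp
  · rintro ⟨i, t⟩ _ hne
    rw [if_neg, map_zero, zero_mul]
    rintro ⟨h1, h2⟩
    exact hne (by simp at h1 h2 ⊢; exact ⟨h1, Fin.ext h2⟩)
  · intro h
    exact absurd (Finset.mem_univ _) h
end Rows

lemma coeff_polyOfVec {L : Type*} [CommRing L] {m : ℕ} (B : ℕ)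
    (w : Fin m × Fin (B + 1) → L) (i : Fin m) (t : ℕ) :
    (∑ t' : Fin (B + 1), Polynomial.C (w (i, t')) * Polynomial.X ^ (t' : ℕ)).coeff t
      = if h : t < B + 1 then w (i, ⟨t, h⟩) else 0 := by
  classical
  rw [Polynomial.finset_sum_coeff]
  have hterm : ∀ t' : Fin (B + 1),
      (Polynomial.C (w (i, t')) * Polynomial.X ^ (t' : ℕ)).coeff t
        = if t = (t' : ℕ) then w (i, t') else 0 := by
    intro t'
    rw [Polynomial.coeff_C_mul, Polynomial.coeff_X_pow]
    split <;> simp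
  simp only [hterm]
  by_cases h : t < B + 1
  · rw [dif_pos h, Finset.sum_eq_single (⟨t, h⟩ : Fin (B + 1))]
    · rw [if_pos rfl]
    · intro t' _ hne
      rw [if_neg]
      intro hval
      exact hne (Fin.ext hval.symm)
    · intro habs
      exact absurd (Finset.mem_univ _) habs
  · rw [dif_neg h]
    apply Finset.sum_eq_zero
    intro t' _
    rw [if_neg]
    omega

end AuxLemmas

/-- **Detecting good reduction of normalised σ-bases.**  Let `R` be a commutative
integral domain and `I ⊆ R` a prime ideal.  Consider a Hermite–Padé interpolation
problem with data `f₁, …, f_m ∈ R[[x]]`, degree bounds `n` and order `σ`, regarded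
over `Frac R` as well as, after coefficientwise reduction modulo `I`, over
`Frac (R ⧸ I)`.  Let `P` be a normalised σ-basis over `Frac R` and `Q` a normalised
σ-basis of the reduced problem over `Frac (R ⧸ I)`.  If `defect (P r) = defect (Q r)`
and the critical indices of `P r` and `Q r` agree for every `r`, then every polynomial
coefficient `c` of `P` lies in the localisation `R_I` of `R` at `I` — i.e. `c = a / b`
with `a ∈ R`, `b ∉ I` — and `Q` is obtained from `P` by applying to every coefficient
the map `π : R_I → Frac (R ⧸ I)`, `a / b ↦ (a mod I) / (b mod I)`, induced by the
quotient map `R → R ⧸ I`. -/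
theorem normalised_sigma_basis_good_reduction {R : Type*} [CommRing R] [IsDomain R]
    (I : Ideal R) [I.IsPrime] {m : ℕ}
    (f : Fin m → PowerSeries R) (n : Fin m → ℕ) (σ : ℕ)
    (P : Fin m → Fin m → (FractionRing R)[X])
    (Q : Fin m → Fin m → (FractionRing (R ⧸ I))[X])
    (hP0 : ∀ r, P r ≠ 0) (hQ0 : ∀ r, Q r ≠ 0)
    (hP : IsSigmaBasis
      (fun l => PowerSeries.map (algebraMap R (FractionRing R)) (f l)) n σ P)
    (hQ : IsSigmaBasis
      (fun l => PowerSeries.map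
        ((algebraMap (R ⧸ I) (FractionRing (R ⧸ I))).comp (Ideal.Quotient.mk I)) (f l))
      n σ Q)
    (hPn : IsNormalisedSeq n P) (hQn : IsNormalisedSeq n Q)
    (hdef : ∀ r, defect n (P r) = defect n (Q r))
    (hcrit : ∀ r i, IsCriticalIndex n (P r) i ↔ IsCriticalIndex n (Q r) i) :
    ∀ (r i : Fin m) (k : ℕ), ∃ a b : R, b ∉ I ∧
      ((P r i).coeff k) * algebraMap R (FractionRing R) b =
        algebraMap R (FractionRing R) a ∧
      ((Q r i).coeff k) *
          algebraMap (R ⧸ I) (FractionRing (R ⧸ I)) (Ideal.Quotient.mk I b) =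
        algebraMap (R ⧸ I) (FractionRing (R ⧸ I)) (Ideal.Quotient.mk I a) := by
  classical
  intro r i k
  set K := FractionRing R with hKdef
  set κ := FractionRing (R ⧸ I) with hκdef
  set φ : R →+* K := algebraMap R K with hφdef
  set ψ : R →+* κ := (algebraMap (R ⧸ I) κ).comp (Ideal.Quotient.mk I) with hψdef
  -- extract the critical indices, pivot degrees, and defects
  choose j hjcrit hjmonic using hPn.2.2
  set D : Fin m → ℕ := fun s => (P s (j s)).natDegree with hDdef
  set e : Fin m → ℤ := fun s => (n (j s) : ℤ) - D s with hedef
  have hD : ∀ s, (n (j s) : ℤ) = e s + D s := by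
    intro s
    simp only [hedef]
    ring
  have hDnat : ∀ s, (P s (j s)).natDegree = D s := fun s => rfl
  have hPjne : ∀ s, P s (j s) ≠ 0 := by
    intro s hz
    have htop : defect n (P s) = ⊤ := by
      rw [← (hjcrit s).1, hz, defectTerm_zero]
    apply hP0 s
    funext i'
    have hle : defect n (P s) ≤ defectTerm (n i') (P s i') :=
      Finset.inf_le (Finset.mem_univ i')
    rw [htop] at hle
    exact defectTerm_eq_top_iff.mp (top_le_iff.mp hle)
  have hdefP : ∀ s, defect n (P s) = ((e s : ℤ) : WithTop ℤ) := by
    intro s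
    rw [← (hjcrit s).1, defectTerm_of_ne_zero _ _ (hPjne s)]
  have hjQ : ∀ s, IsCriticalIndex n (Q s) (j s) := fun s => (hcrit s (j s)).mp (hjcrit s)
  have hQmonic : ∀ s, (Q s (j s)).Monic := by
    intro s
    obtain ⟨i', hi'c, hi'm⟩ := hQn.2.2 s
    rwa [critical_unique hi'c (hjQ s)] at hi'm
  have hdefQ : ∀ s, defect n (Q s) = ((e s : ℤ) : WithTop ℤ) := by
    intro s
    rw [← hdef s]
    exact hdefP s
  have hQjne : ∀ s, Q s (j s) ≠ 0 := by
    intro s hz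
    have h := (hjQ s).1
    rw [hz, defectTerm_zero, hdefQ s] at h
    exact WithTop.coe_ne_top h.symm
  have hQdeg : ∀ s, (Q s (j s)).natDegree = D s := by
    intro s
    have h := (hjQ s).1
    rw [defectTerm_of_ne_zero _ _ (hQjne s), hdefQ s] at h
    have h2 := WithTop.coe_inj.mp h
    have h3 := hD s
    omega
  -- coefficient vanishing from the defect bound
  have h1P : ∀ s i' (t : ℕ), (n i' : ℤ) - t < e s → (P s i').coeff t = 0 := by
    intro s i' t ht
    by_cases hz : P s i' = 0
    · simp [hz]
    · have hle : ((e s : ℤ) : WithTop ℤ) ≤ defectTerm (n i') (P s i') := by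
        rw [← hdefP s]
        exact Finset.inf_le (Finset.mem_univ i')
      rw [defectTerm_of_ne_zero _ _ hz] at hle
      have h2 := WithTop.coe_le_coe.mp hle
      apply Polynomial.coeff_eq_zero_of_natDegree_lt
      omega
  have h1Q : ∀ s i' (t : ℕ), (n i' : ℤ) - t < e s → (Q s i').coeff t = 0 := by
    intro s i' t ht
    by_cases hz : Q s i' = 0
    · simp [hz]
    · have hle : ((e s : ℤ) : WithTop ℤ) ≤ defectTerm (n i') (Q s i') := by
        rw [← hdefQ s]
        exact Finset.inf_le (Finset.mem_univ i')
      rw [defectTerm_of_ne_zero _ _ hz] at hle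
      have h2 := WithTop.coe_le_coe.mp hle
      apply Polynomial.coeff_eq_zero_of_natDegree_lt
      omega
  -- coefficient vanishing from reducedness
  have h3P : ∀ t s, t ≠ s → ∀ u : ℕ, (D s : ℤ) ≤ u → (P t (j s)).coeff u = 0 := by
    intro t s hts u hu
    have hlt := hPn.2.1 t s hts (j s) (hjcrit s)
    apply Polynomial.coeff_eq_zero_of_degree_lt
    refine lt_of_lt_of_le hlt ?_
    rw [Polynomial.degree_eq_natDegree (hPjne s), hDnat s]
    exact_mod_cast (by omega : D s ≤ u)
  have h3Q : ∀ t s, t ≠ s → ∀ u : ℕ, (D s : ℤ) ≤ u → (Q t (j s)).coeff u = 0 := by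
    intro t s hts u hu
    have hlt := hQn.2.1 t s hts (j s) (hjQ s)
    apply Polynomial.coeff_eq_zero_of_degree_lt
    refine lt_of_lt_of_le hlt ?_
    rw [Polynomial.degree_eq_natDegree (hQjne s), hQdeg s]
    exact_mod_cast (by omega : D s ≤ u)
  have h2Q : ∀ s, (Q s (j s)).natDegree = D s ∧ (Q s (j s)).coeff (D s) = 1 := by
    intro s
    refine ⟨hQdeg s, ?_⟩
    rw [← hQdeg s]
    exact (hQmonic s).coeff_natDegree
  have h4Q : ∀ q : Fin m → κ[X],
      IsSolution (fun l => PowerSeries.map ψ (f l)) σ q →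
        ∃ α : Fin m → κ[X], ∀ i', q i' = ∑ t, α t * Q t i' :=
    fun q hq => ((hQ.2 q hq).1).exists
  -- the pivot coefficient of `P r` and `Q r`
  have c4P : (P r (j r)).coeff (D r) = 1 := by
    rw [← hDnat r]
    exact (hjmonic r).coeff_natDegree
  have c4Q : (Q r (j r)).coeff (D r) = 1 := (h2Q r).2
  -- the degree truncation bound
  set B : ℕ := Finset.univ.sup (fun i' => ((n i' : ℤ) - e r).toNat) with hBdef
  have hB : ∀ i' (t : ℕ), B < t → (n i' : ℤ) - t < e r := by
    intro i' t ht
    have h1 : ((n i' : ℤ) - e r).toNat ≤ B :=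
      Finset.le_sup (f := fun i'' => ((n i'' : ℤ) - e r).toNat) (Finset.mem_univ i')
    omega
  have hDrB : D r < B + 1 := by
    have h1 : ((n (j r) : ℤ) - e r).toNat ≤ B :=
      Finset.le_sup (f := fun i'' => ((n i'' : ℤ) - e r).toNat) (Finset.mem_univ (j r))
    have h2 := hD r
    omega
  have hsuppP : ∀ i' (t : ℕ), B < t → (P r i').coeff t = 0 :=
    fun i' t ht => h1P r i' t (hB i' t ht)
  have hsuppQ : ∀ i' (t : ℕ), B < t → (Q r i').coeff t = 0 :=
    fun i' t ht => h1Q r i' t (hB i' t ht)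
  set A : Matrix (sysE m σ B) (Fin m × Fin (B + 1)) R := sysMat σ B f n e j D r with hAdef
  set bb : sysE m σ B → R := sysVec m σ B with hbbdef
  set xs : Fin m × Fin (B + 1) → K := fun u => (P r u.1).coeff u.2 with hxsdef
  set ys : Fin m × Fin (B + 1) → κ := fun u => (Q r u.1).coeff u.2 with hysdef
  -- `P r` solves the system over `K`
  have hxP : (A.map φ).mulVec xs = fun ee => φ (bb ee) := by
    funext ee
    obtain k' | (w | (w | u)) := ee
    · rw [hAdef, hxsdef, sys_row1 σ B φ f n e j D r (P r) hsuppP k']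
      have := hP.1 r (k' : ℕ) k'.isLt
      simpa [hbbdef, sysVec] using this
    · rw [hAdef, hxsdef, sys_row2 σ B φ f n e j D r (P r) w]
      by_cases hcond : (n w.1 : ℤ) - ((w.2 : ℕ) : ℤ) < e r
      · rw [if_pos hcond, h1P r w.1 w.2 hcond]
        simp [hbbdef, sysVec]
      · rw [if_neg hcond]
        simp [hbbdef, sysVec]
    · rw [hAdef, hxsdef, sys_row3 σ B φ f n e j D r (P r) w]
      by_cases hcond : w.1 ≠ r ∧ (D w.1 : ℤ) ≤ ((w.2 : ℕ) : ℤ)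
      · rw [if_pos hcond, h3P r w.1 (Ne.symm hcond.1) w.2 hcond.2]
        simp [hbbdef, sysVec]
      · rw [if_neg hcond]
        simp [hbbdef, sysVec]
    · rw [hAdef, hxsdef, sys_row4 σ B φ f n e j D r (P r) hDrB, c4P]
      simp [hbbdef, sysVec]
  -- `Q r` solves the system over `κ`
  have hyQ : (A.map ψ).mulVec ys = fun ee => ψ (bb ee) := by
    funext ee
    obtain k' | (w | (w | u)) := ee
    · rw [hAdef, hysdef, sys_row1 σ B ψ f n e j D r (Q r) hsuppQ k']
      have := hQ.1 r (k' : ℕ) k'.isLt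
      simpa [hbbdef, sysVec] using this
    · rw [hAdef, hysdef, sys_row2 σ B ψ f n e j D r (Q r) w]
      by_cases hcond : (n w.1 : ℤ) - ((w.2 : ℕ) : ℤ) < e r
      · rw [if_pos hcond, h1Q r w.1 w.2 hcond]
        simp [hbbdef, sysVec]
      · rw [if_neg hcond]
        simp [hbbdef, sysVec]
    · rw [hAdef, hysdef, sys_row3 σ B ψ f n e j D r (Q r) w]
      by_cases hcond : w.1 ≠ r ∧ (D w.1 : ℤ) ≤ ((w.2 : ℕ) : ℤ)
      · rw [if_pos hcond, h3Q r w.1 (Ne.symm hcond.1) w.2 hcond.2]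
        simp [hbbdef, sysVec]
      · rw [if_neg hcond]
        simp [hbbdef, sysVec]
    · rw [hAdef, hysdef, sys_row4 σ B ψ f n e j D r (Q r) hDrB, c4Q]
      simp [hbbdef, sysVec]
  -- uniqueness of the solution over `κ`
  have huniq : ∀ z : Fin m × Fin (B + 1) → κ, (A.map ψ).mulVec z = 0 → z = 0 := by
    intro z hz
    set wv : Fin m × Fin (B + 1) → κ := fun u => ys u + z u with hwvdef
    have hsol : (A.map ψ).mulVec wv = fun ee => ψ (bb ee) := by
      have hadd : (A.map ψ).mulVec wv = (A.map ψ).mulVec ys + (A.map ψ).mulVec z := by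
        rw [← Matrix.mulVec_add]
        rfl
      rw [hadd, hyQ, hz]
      funext ee
      simp
    set pp : Fin m → κ[X] :=
      fun i' => ∑ t' : Fin (B + 1), Polynomial.C (wv (i', t')) * Polynomial.X ^ (t' : ℕ)
      with hppdef
    have hppcoeff : ∀ i' (t : ℕ),
        (pp i').coeff t = if h : t < B + 1 then wv (i', ⟨t, h⟩) else 0 :=
      fun i' t => coeff_polyOfVec B wv i' t
    have hxw : (fun u : Fin m × Fin (B + 1) => (pp u.1).coeff u.2) = wv := by
      funext u
      rw [hppcoeff u.1 u.2, dif_pos u.2.isLt]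
    have hsupp_pp : ∀ i' (t : ℕ), B < t → (pp i').coeff t = 0 := by
      intro i' t ht
      rw [hppcoeff, dif_neg (by omega)]
    rw [← hxw] at hsol
    have c1pp : IsSolution (fun l => PowerSeries.map ψ (f l)) σ pp := by
      intro kk hkk
      have h := congrFun hsol (Sum.inl ⟨kk, hkk⟩)
      rw [hAdef, sys_row1 σ B ψ f n e j D r pp hsupp_pp ⟨kk, hkk⟩] at h
      simpa [hbbdef, sysVec] using h
    have c2pp : ∀ i' (t : ℕ), (n i' : ℤ) - t < e r → (pp i').coeff t = 0 := by
      intro i' t ht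
      by_cases hlt : t < B + 1
      · have h := congrFun hsol (Sum.inr (Sum.inl (i', ⟨t, hlt⟩)))
        rw [hAdef, sys_row2 σ B ψ f n e j D r pp (i', ⟨t, hlt⟩)] at h
        rw [if_pos (by exact_mod_cast ht)] at h
        simpa [hbbdef, sysVec] using h
      · exact hsupp_pp i' t (by omega)
    have c3pp : ∀ s, s ≠ r → ∀ u : ℕ, (D s : ℤ) ≤ u → (pp (j s)).coeff u = 0 := by
      intro s hsr u hu
      by_cases hlt : u < B + 1
      · have h := congrFun hsol (Sum.inr (Sum.inr (Sum.inl (s, ⟨u, hlt⟩))))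
        rw [hAdef, sys_row3 σ B ψ f n e j D r pp (s, ⟨u, hlt⟩)] at h
        rw [if_pos ⟨hsr, by exact_mod_cast hu⟩] at h
        simpa [hbbdef, sysVec] using h
      · exact hsupp_pp (j s) u (by omega)
    have c4pp : (pp (j r)).coeff (D r) = 1 := by
      have h := congrFun hsol (Sum.inr (Sum.inr (Sum.inr ())))
      rw [hAdef, sys_row4 σ B ψ f n e j D r pp hDrB] at h
      simpa [hbbdef, sysVec] using h
    have c2Q : ∀ i' (t : ℕ), (n i' : ℤ) - t < e r → (Q r i').coeff t = 0 := h1Q r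
    have c3Q : ∀ s, s ≠ r → ∀ u : ℕ, (D s : ℤ) ≤ u → (Q r (j s)).coeff u = 0 :=
      fun s hsr u hu => h3Q r s (Ne.symm hsr) u hu
    have hppQ : pp = Q r :=
      uniq_char (fun l => PowerSeries.map ψ (f l)) n σ Q e j D hD h1Q h2Q h3Q h4Q
        pp (Q r) c1pp (hQ.1 r) c2pp c2Q c3pp c3Q c4pp c4Q
    funext u
    have h1 : wv u = ys u := by
      rw [← hxw]
      simp only [hppQ]
      rfl
    have h2 : wv u = ys u + z u := rfl
    rw [h2] at h1
    show z u = 0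
    exact left_eq_add.mp h1.symm
  -- apply the Cramer-type transfer lemma
  have main := key_linalg φ ψ A bb xs hxP ys hyQ huniq
  by_cases hk : k < B + 1
  · obtain ⟨a, c, hc, hα1, hα2⟩ := main (i, ⟨k, hk⟩)
    refine ⟨a, c, ?_, hα1, hα2⟩
    intro hcI
    apply hc
    show (algebraMap (R ⧸ I) κ) (Ideal.Quotient.mk I c) = 0
    rw [Ideal.Quotient.eq_zero_iff_mem.mpr hcI, map_zero]
  · refine ⟨0, 1, ?_, ?_, ?_⟩
    · exact (Ideal.ne_top_iff_one I).mp (Ideal.IsPrime.ne_top (by infer_instance))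
    · rw [h1P r i k (hB i k (by omega))]
      simp
    · rw [h1Q r i k (hB i k (by omega))]
      simp
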